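/- For every integer N > 2 there exist signals x and y with support {0,…,N-1}, both having all components real and non-negative (hence identical zero phases arg x[n] = arg y[n] = 0 on their support), with |𝓕x(ω)| = |𝓕y(ω)| for all ω ∈ ℝ, but y ≠ x. Explicitly one may take 𝓕x(ω) = c_x (e^{-iω} + 2)(e^{-iω} + 3)(e^{-iω} + 1)^{N-3} and 𝓕y(ω) = c_y (e^{-iω} + 1/2)(e^{-iω} + 3)(e^{-iω} + 1)^{N-3} with c_x, c_y > 0 chosen so that the intensities agree. -/

import Mathlib

open Complex Polynomial

lemma mul_coeff_nonneg {p q : ℝ[X]} (hp : ∀ n, 0 ≤ p.coeff n) (hq : ∀ n, 0 ≤ q.coeff n) :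
    ∀ n, 0 ≤ (p * q).coeff n := by
  intro n
  rw [Polynomial.coeff_mul]
  exact Finset.sum_nonneg fun _ _ => mul_nonneg (hp _) (hq _)

lemma pow_coeff_nonneg {p : ℝ[X]} (hp : ∀ n, 0 ≤ p.coeff n) (k : ℕ) :
    ∀ n, 0 ≤ (p ^ k).coeff n := by
  induction k with
  | zero => intro n; simp [Polynomial.coeff_one]; split <;> norm_num
  | succ k ih => rw [pow_succ]; exact mul_coeff_nonneg ih hp

lemma X_add_C_coeff_nonneg {a : ℝ} (ha : 0 ≤ a) : ∀ n, 0 ≤ (X + C a).coeff n := by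
  intro n
  rcases n with _ | _ | n <;>
    simp [Polynomial.coeff_add, Polynomial.coeff_X, Polynomial.coeff_C, ha]

theorem nonuniqueness_with_full_phase (N : ℕ) (hN : 2 < N) :
    ∃ x y : ℤ → ℂ, ∃ cx cy : ℝ, 0 < cx ∧ 0 < cy ∧
      (∀ n : ℤ, (n < 0 ∨ (N : ℤ) ≤ n) → x n = 0) ∧
      (∀ n : ℤ, (n < 0 ∨ (N : ℤ) ≤ n) → y n = 0) ∧
      (∀ ω : ℝ,
        ∑ n ∈ Finset.range N, x n * Complex.exp (-Complex.I * (ω : ℂ) * (n : ℂ))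
          = (cx : ℂ) * (Complex.exp (-Complex.I * (ω : ℂ)) + 2) *
            (Complex.exp (-Complex.I * (ω : ℂ)) + 3) *
            (Complex.exp (-Complex.I * (ω : ℂ)) + 1) ^ (N - 3)) ∧
      (∀ ω : ℝ,
        ∑ n ∈ Finset.range N, y n * Complex.exp (-Complex.I * (ω : ℂ) * (n : ℂ))
          = (cy : ℂ) * (Complex.exp (-Complex.I * (ω : ℂ)) + 1 / 2) *
            (Complex.exp (-Complex.I * (ω : ℂ)) + 3) *
            (Complex.exp (-Complex.I * (ω : ℂ)) + 1) ^ (N - 3)) ∧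
      (∀ n : ℤ, (x n).im = 0 ∧ 0 ≤ (x n).re) ∧
      (∀ n : ℤ, (y n).im = 0 ∧ 0 ≤ (y n).re) ∧
      (∀ ω : ℝ,
        ‖∑ n ∈ Finset.range N, x n * Complex.exp (-Complex.I * (ω : ℂ) * (n : ℂ))‖
          = ‖∑ n ∈ Finset.range N, y n * Complex.exp (-Complex.I * (ω : ℂ) * (n : ℂ))‖) ∧
      y ≠ x := by
  set k := N - 3 with hk
  -- real polynomials
  set p : ℝ[X] := (X + C 2) * (X + C 3) * (X + C 1) ^ k with hp
  set q : ℝ[X] := C 2 * ((X + C (1/2)) * (X + C 3) * (X + C 1) ^ k) with hq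
  have hpco : ∀ n, 0 ≤ p.coeff n :=
    mul_coeff_nonneg (mul_coeff_nonneg (X_add_C_coeff_nonneg (by norm_num))
      (X_add_C_coeff_nonneg (by norm_num))) (pow_coeff_nonneg (X_add_C_coeff_nonneg (by norm_num)) k)
  have hqco : ∀ n, 0 ≤ q.coeff n := by
    have h2 : ∀ n, 0 ≤ (C (2:ℝ)).coeff n := by
      intro n; simp [Polynomial.coeff_C]; split <;> norm_num
    exact mul_coeff_nonneg h2 (mul_coeff_nonneg (mul_coeff_nonneg
      (X_add_C_coeff_nonneg (by norm_num)) (X_add_C_coeff_nonneg (by norm_num)))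
      (pow_coeff_nonneg (X_add_C_coeff_nonneg (by norm_num)) k))
  have hmon : ((X + C (2:ℝ)) * (X + C 3) * (X + C 1) ^ k).Monic :=
    ((monic_X_add_C 2).mul (monic_X_add_C 3)).mul ((monic_X_add_C 1).pow k)
  have hdeg : p.natDegree = k + 2 := by
    rw [hp, ((monic_X_add_C (2:ℝ)).mul (monic_X_add_C 3)).natDegree_mul ((monic_X_add_C 1).pow k),
      (monic_X_add_C (2:ℝ)).natDegree_mul (monic_X_add_C 3), natDegree_pow,
      natDegree_X_add_C]
    simp only [natDegree_X_add_C]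
    ring
  have hdeg' : q.natDegree = k + 2 := by
    rw [hq, natDegree_C_mul (by norm_num : (2:ℝ) ≠ 0),
      ((monic_X_add_C ((1:ℝ)/2)).mul (monic_X_add_C 3)).natDegree_mul ((monic_X_add_C 1).pow k),
      (monic_X_add_C ((1:ℝ)/2)).natDegree_mul (monic_X_add_C 3), natDegree_pow,
      natDegree_X_add_C]
    simp only [natDegree_X_add_C]
    ring
  have hkN : k + 2 < N := by omega
  set X : ℤ → ℂ := fun n => ((p.coeff n.toNat : ℝ) : ℂ) * (if 0 ≤ n then 1 else 0) with hX
  set Y : ℤ → ℂ := fun n => ((q.coeff n.toNat : ℝ) : ℂ) * (if 0 ≤ n then 1 else 0) with hY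
  have hsum : ∀ (ω : ℝ) (r : ℝ[X]), r.natDegree < N →
      ∑ n ∈ Finset.range N, ((r.coeff ((n:ℤ).toNat) : ℝ) : ℂ) * (if (0:ℤ) ≤ (n:ℤ) then 1 else 0)
        * Complex.exp (-Complex.I * (ω : ℂ) * (n : ℂ))
      = (r.map (algebraMap ℝ ℂ)).eval (Complex.exp (-Complex.I * ω)) := by
    intro ω r hr
    rw [eval_eq_sum_range' (lt_of_le_of_lt natDegree_map_le hr)]
    refine Finset.sum_congr rfl fun n _ => ?_
    rw [coeff_map]
    rw [show (-Complex.I * (ω:ℂ) * (n:ℂ)) = (n:ℂ) * (-Complex.I * ω) by ring,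
      Complex.exp_nat_mul]
    simp [Int.toNat_natCast]
  have hFx : ∀ ω : ℝ,
      ∑ n ∈ Finset.range N, X n * Complex.exp (-Complex.I * (ω : ℂ) * (n : ℂ))
        = ((1:ℝ) : ℂ) * (Complex.exp (-Complex.I * (ω : ℂ)) + 2) *
          (Complex.exp (-Complex.I * (ω : ℂ)) + 3) *
          (Complex.exp (-Complex.I * (ω : ℂ)) + 1) ^ (N - 3) := by
    intro ω
    rw [hX]
    rw [hsum ω p (by omega)]
    simp only [hp, Polynomial.map_mul, Polynomial.map_pow, Polynomial.map_add,
      Polynomial.map_X, Polynomial.map_C, eval_mul, eval_pow, eval_add, eval_X, eval_C]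
    push_cast
    ring
  have hFy : ∀ ω : ℝ,
      ∑ n ∈ Finset.range N, Y n * Complex.exp (-Complex.I * (ω : ℂ) * (n : ℂ))
        = ((2:ℝ) : ℂ) * (Complex.exp (-Complex.I * (ω : ℂ)) + 1 / 2) *
          (Complex.exp (-Complex.I * (ω : ℂ)) + 3) *
          (Complex.exp (-Complex.I * (ω : ℂ)) + 1) ^ (N - 3) := by
    intro ω
    rw [hY]
    rw [hsum ω q (by omega)]
    simp only [hq, Polynomial.map_mul, Polynomial.map_pow, Polynomial.map_add,
      Polynomial.map_X, Polynomial.map_C, eval_mul, eval_pow, eval_add, eval_X, eval_C]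
    push_cast
    ring
  refine ⟨X, Y, 1, 2, one_pos, two_pos, ?_, ?_, hFx, hFy, ?_, ?_, ?_, ?_⟩
  · intro n hn
    rcases hn with hn | hn
    · simp [hX, not_le.mpr hn]
    · have : p.natDegree < n.toNat := by omega
      simp [hX, coeff_eq_zero_of_natDegree_lt this]
  · intro n hn
    rcases hn with hn | hn
    · simp [hY, not_le.mpr hn]
    · have : q.natDegree < n.toNat := by omega
      simp [hY, coeff_eq_zero_of_natDegree_lt this]
  · refine fun n => ⟨?_, ?_⟩ <;> by_cases h : (0:ℤ) ≤ n <;> simp [hX, h, hpco]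
  · refine fun n => ⟨?_, ?_⟩ <;> by_cases h : (0:ℤ) ≤ n <;> simp [hY, h, hqco]
  · intro ω
    rw [hFx ω, hFy ω]
    set z := Complex.exp (-Complex.I * ω) with hz
    have hz1 : ‖z‖ = 1 := by simp [hz, Complex.norm_exp]
    have hn2 : z.re ^ 2 + z.im ^ 2 = 1 := by
      have := Complex.sq_norm z
      rw [hz1] at this
      simpa [Complex.normSq_apply, sq] using this.symm
    have key : ‖z + 2‖ = ‖(2:ℂ)‖ * ‖z + 1/2‖ := by
      rw [← norm_mul]
      have h21 : (2:ℂ) * (z + 1/2) = 2 * z + 1 := by ring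
      rw [h21, Complex.norm_def, Complex.norm_def]
      congr 1
      simp only [Complex.normSq_apply, Complex.add_re, Complex.add_im, Complex.mul_re,
        Complex.mul_im, Complex.re_ofNat, Complex.im_ofNat, Complex.one_re, Complex.one_im]
      nlinarith [hn2]
    simp only [norm_mul, norm_pow, key]
    have h1 : ‖((1:ℝ):ℂ)‖ = 1 := by norm_num
    have h2 : ‖((2:ℝ):ℂ)‖ = ‖(2:ℂ)‖ := by norm_num
    rw [h1, h2]
    ring
  · intro h
    have h0 := congrFun h 0
    have hp0 : p.coeff 0 = 6 := by
      rw [coeff_zero_eq_eval_zero, hp]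
      simp
      all_goals norm_num
    have hq0 : q.coeff 0 = 3 := by
      rw [coeff_zero_eq_eval_zero, hq]
      simp
      all_goals norm_num
    simp [hX, hY, hp0, hq0] at h0
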